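/- Let X be a nonempty finite type, let D_0, D_1 be distributions on X, let 𝓕 be a family of functions X → [0,1], let ε ∈ (0,1) and γ ∈ (0, 1/10). Set D_X := (1/2)(D_0 + D_1) and let g be the associated posterior function. Suppose h : X → [0,1] is (𝓕, ε)-regular and γ-calibrated for g under D_X. Set p := E_{D_X}[h]. Then 0 < p < 1, and defining distributions D̃_1(z) := h(z)·D_X(z)/p and D̃_0(z) := (1−h(z))·D_X(z)/(1−p), for each b ∈ {0,1} and every f ∈ 𝓕 one has |E_{D_b}[f] − E_{D̃_b}[f]| ≤ 2ε + 5γ. -/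

import Mathlib

/-- Expectation of `f` under the (finitely supported) distribution `D`. -/
noncomputable def expect {X : Type*} [Fintype X] (D f : X → ℝ) : ℝ := ∑ x, D x * f x

/-- `D` is a probability distribution on the finite type `X`. -/
def IsDist {X : Type*} [Fintype X] (D : X → ℝ) : Prop := (∀ x, 0 ≤ D x) ∧ ∑ x, D x = 1

theorem stmt_0 {X : Type*} [Fintype X] [Nonempty X]
    (D0 D1 : X → ℝ) (hD0 : IsDist D0) (hD1 : IsDist D1)
    (𝓕 : Set (X → ℝ)) (h𝓕 : ∀ f ∈ 𝓕, ∀ x, f x ∈ Set.Icc (0:ℝ) 1)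
    (ε γ : ℝ) (hε : ε ∈ Set.Ioo (0:ℝ) 1) (hγ : γ ∈ Set.Ioo (0:ℝ) (1/10))
    (DX : X → ℝ) (hDX : DX = fun x => (D0 x + D1 x) / 2)
    (g : X → ℝ)
    (hg : g = fun x => if 0 < D0 x + D1 x then D1 x / (D0 x + D1 x) else 0)
    (h : X → ℝ) (hh : ∀ x, h x ∈ Set.Icc (0:ℝ) 1)
    (hreg : ∀ f ∈ 𝓕, |expect DX (fun x => f x * (g x - h x))| ≤ ε)
    (hcal : ∀ w : ℝ → ℝ, (∀ t, w t ∈ Set.Icc (0:ℝ) 1) →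
      |expect DX (fun x => w (h x) * (g x - h x))| ≤ γ)
    (p : ℝ) (hp : p = expect DX h) :
    0 < p ∧ p < 1 ∧
    ∀ f ∈ 𝓕,
      |expect D1 f - expect (fun z => h z * DX z / p) f| ≤ 2 * ε + 5 * γ ∧
      |expect D0 f - expect (fun z => (1 - h z) * DX z / (1 - p)) f| ≤ 2 * ε + 5 * γ := by
  obtain ⟨hD0n, hD0s⟩ := hD0
  obtain ⟨hD1n, hD1s⟩ := hD1
  obtain ⟨hε0, hε1⟩ := hε
  obtain ⟨hγ0, hγ1⟩ := hγ
  have hDXn : ∀ x, 0 ≤ DX x := by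
    intro x; rw [hDX]; have := hD0n x; have := hD1n x; dsimp; linarith
  have hDXs : ∑ x, DX x = 1 := by
    rw [hDX]
    rw [show (∑ x, (D0 x + D1 x) / 2) = ((∑ x, D0 x) + (∑ x, D1 x)) / 2 by
      rw [← Finset.sum_add_distrib, Finset.sum_div]]
    rw [hD0s, hD1s]; norm_num
  have key1 : ∀ x, D1 x = 2 * (DX x * g x) := by
    intro x
    rw [hDX, hg]
    by_cases hx : 0 < D0 x + D1 x
    · simp only [hx, if_pos]
      field_simp
    · have h0 : D0 x = 0 := by have := hD0n x; have := hD1n x; push_neg at hx; linarith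
      have h1 : D1 x = 0 := by have := hD0n x; have := hD1n x; push_neg at hx; linarith
      simp [hx, h0, h1]
  have key0 : ∀ x, D0 x = 2 * (DX x * (1 - g x)) := by
    intro x
    rw [hDX, hg]
    by_cases hx : 0 < D0 x + D1 x
    · simp only [hx, if_pos]
      field_simp
      ring
    · have h0 : D0 x = 0 := by have := hD0n x; have := hD1n x; push_neg at hx; linarith
      have h1 : D1 x = 0 := by have := hD0n x; have := hD1n x; push_neg at hx; linarith
      simp [hx, h0, h1]
  have hEg : ∑ x, DX x * g x = 1 / 2 := by
    have e : ∀ x ∈ Finset.univ (α := X), DX x * g x = D1 x / 2 := by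
      intro x _; have := key1 x; linarith
    rw [Finset.sum_congr rfl e, ← Finset.sum_div, hD1s]
  have hpclose : |1 / 2 - p| ≤ γ := by
    have H := hcal (fun _ => 1) (by intro t; constructor <;> norm_num)
    have e : expect DX (fun x => (1:ℝ) * (g x - h x)) = 1 / 2 - p := by
      unfold expect
      rw [show (∑ x, DX x * (1 * (g x - h x))) = (∑ x, DX x * g x) - ∑ x, DX x * h x by
        rw [← Finset.sum_sub_distrib]; apply Finset.sum_congr rfl; intro x _; ring]
      rw [hEg, hp]; rfl
    rwa [e] at H
  have hpab := abs_le.mp hpclose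
  have hp0 : 0 < p := by linarith [hpab.1, hpab.2]
  have hp1 : p < 1 := by linarith [hpab.1, hpab.2]
  have h2p : |2 * p - 1| ≤ 2 * γ := by
    rw [abs_le]; constructor <;> linarith [hpab.1, hpab.2]
  refine ⟨hp0, hp1, ?_⟩
  intro f hf
  have hf0 : ∀ x, 0 ≤ f x := fun x => (h𝓕 f hf x).1
  have hf1 : ∀ x, f x ≤ 1 := fun x => (h𝓕 f hf x).2
  set A : ℝ := ∑ x, DX x * (f x * g x) with hA
  set B : ℝ := ∑ x, DX x * (f x * h x) with hB
  have hregf : |A - B| ≤ ε := by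
    have H := hreg f hf
    have e : expect DX (fun x => f x * (g x - h x)) = A - B := by
      unfold expect
      rw [hA, hB, ← Finset.sum_sub_distrib]
      apply Finset.sum_congr rfl; intro x _; ring
    rwa [e] at H
  have hB0 : 0 ≤ B := by
    apply Finset.sum_nonneg; intro x _
    exact mul_nonneg (hDXn x) (mul_nonneg (hf0 x) (hh x).1)
  have hBp : B ≤ p := by
    rw [hp]; unfold expect
    apply Finset.sum_le_sum; intro x _
    nlinarith [mul_nonneg (mul_nonneg (hDXn x) (hh x).1) (sub_nonneg.mpr (hf1 x))]
  set A' : ℝ := ∑ x, DX x * (f x * (1 - g x)) with hA'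
  set B' : ℝ := ∑ x, DX x * (f x * (1 - h x)) with hB'
  have hregf' : |A' - B'| ≤ ε := by
    have e : A' - B' = B - A := by
      rw [hA', hB', hA, hB, ← Finset.sum_sub_distrib, ← Finset.sum_sub_distrib]
      apply Finset.sum_congr rfl; intro x _; ring
    rw [e, abs_sub_comm]; exact hregf
  have hB'0 : 0 ≤ B' := by
    apply Finset.sum_nonneg; intro x _
    exact mul_nonneg (hDXn x) (mul_nonneg (hf0 x) (by linarith [(hh x).2]))
  have hB'p : B' ≤ 1 - p := by
    have e : (1:ℝ) - p = ∑ x, DX x * (1 - h x) := by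
      rw [hp]; unfold expect
      rw [show (∑ x, DX x * (1 - h x)) = (∑ x, DX x) - ∑ x, DX x * h x by
        rw [← Finset.sum_sub_distrib]; apply Finset.sum_congr rfl; intro x _; ring]
      rw [hDXs]
    rw [e]
    apply Finset.sum_le_sum; intro x _
    nlinarith [mul_nonneg (mul_nonneg (hDXn x) (sub_nonneg.mpr (hh x).2)) (sub_nonneg.mpr (hf1 x))]
  -- expectation identities
  have hED1 : expect D1 f = 2 * A := by
    unfold expect
    rw [hA, Finset.mul_sum]
    apply Finset.sum_congr rfl; intro x _
    rw [key1 x]; ring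
  have hED0 : expect D0 f = 2 * A' := by
    unfold expect
    rw [hA', Finset.mul_sum]
    apply Finset.sum_congr rfl; intro x _
    rw [key0 x]; ring
  have hEt1 : expect (fun z => h z * DX z / p) f = B / p := by
    unfold expect
    rw [hB, Finset.sum_div]
    apply Finset.sum_congr rfl; intro x _; ring
  have hEt0 : expect (fun z => (1 - h z) * DX z / (1 - p)) f = B' / (1 - p) := by
    unfold expect
    rw [hB', Finset.sum_div]
    apply Finset.sum_congr rfl; intro x _; ring
  constructor
  · rw [hED1, hEt1]
    have h1 : |2 * A - 2 * B| ≤ 2 * ε := by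
      rw [show 2 * A - 2 * B = 2 * (A - B) by ring, abs_mul, abs_of_nonneg (by norm_num : (0:ℝ) ≤ 2)]
      linarith
    have h2 : |2 * B - B / p| ≤ 2 * γ := by
      rw [show 2 * B - B / p = B * ((2 * p - 1) / p) by field_simp,
        abs_mul, abs_div, abs_of_pos hp0, abs_of_nonneg hB0]
      have step : B * (|2 * p - 1| / p) ≤ p * (|2 * p - 1| / p) :=
        mul_le_mul_of_nonneg_right hBp (by positivity)
      have eq2 : p * (|2 * p - 1| / p) = |2 * p - 1| := by field_simp
      linarith [step, eq2 ▸ step, h2p]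
    calc |2 * A - B / p| ≤ |2 * A - 2 * B| + |2 * B - B / p| := abs_sub_le _ _ _
      _ ≤ 2 * ε + 2 * γ := by linarith
      _ ≤ 2 * ε + 5 * γ := by linarith
  · rw [hED0, hEt0]
    have hq0 : 0 < 1 - p := by linarith
    have h1 : |2 * A' - 2 * B'| ≤ 2 * ε := by
      rw [show 2 * A' - 2 * B' = 2 * (A' - B') by ring, abs_mul,
        abs_of_nonneg (by norm_num : (0:ℝ) ≤ 2)]
      linarith
    have h2 : |2 * B' - B' / (1 - p)| ≤ 2 * γ := by
      rw [show 2 * B' - B' / (1 - p) = B' * ((1 - 2 * p) / (1 - p)) by field_simp; ring,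
        abs_mul, abs_div, abs_of_pos hq0, abs_of_nonneg hB'0]
      have habs : |1 - 2 * p| ≤ 2 * γ := by
        rw [abs_le]; constructor <;> linarith [hpab.1, hpab.2]
      have step : B' * (|1 - 2 * p| / (1 - p)) ≤ (1 - p) * (|1 - 2 * p| / (1 - p)) :=
        mul_le_mul_of_nonneg_right hB'p (by positivity)
      have eq2 : (1 - p) * (|1 - 2 * p| / (1 - p)) = |1 - 2 * p| := by field_simp
      linarith [step, eq2 ▸ step, habs]
    calc |2 * A' - B' / (1 - p)| ≤ |2 * A' - 2 * B'| + |2 * B' - B' / (1 - p)| := abs_sub_le _ _ _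
      _ ≤ 2 * ε + 2 * γ := by linarith
      _ ≤ 2 * ε + 5 * γ := by linarith
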